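/- Vector-valued Cauchy inequalities: let $E$ be a complex locally convex space, $c$ a holomorphic function from an open subset of $\mathbb{C}$ to $E$ (given locally by a convergent power series), $z$ a point of the domain and $r > 0$ less than the radius of convergence of $c$ at $z$ with the closed disc of radius $r$ about $z$ contained in the domain. Then for every $k$, $\frac{r^k}{k!} c^{(k)}(z)$ lies in the closed absolutely convex hull of $\{c(w) : |w - z| = r\}$. -/

import Mathlib

/-- The set of absolutely convex combinations (over `ℂ`) of elements of `S`:
finite sums `∑ λᵢ sᵢ` with `sᵢ ∈ S` and `∑ |λᵢ| ≤ 1`.  Its closure is the closed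
absolutely convex hull of `S`. -/
def absConvexCombinations {E : Type*} [AddCommGroup E] [Module ℂ E] (S : Set E) : Set E :=
  {x | ∃ (n : ℕ) (lam : Fin n → ℂ) (s : Fin n → E),
    (∀ i, s i ∈ S) ∧ (∑ i, ‖lam i‖) ≤ 1 ∧ x = ∑ i, lam i • s i}

open Finset Real Filter Topology Pointwise

private lemma rootSum' (N : ℕ) (hN : 0 < N) (m : ℤ) :
    ∑ j ∈ Finset.range N, Complex.exp ((2 * Real.pi / N : ℝ) * Complex.I) ^ ((j : ℤ) * m) =
      if (N : ℤ) ∣ m then (N : ℂ) else 0 := by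
  have hNC : (N : ℂ) ≠ 0 := Nat.cast_ne_zero.2 hN.ne'
  set ω : ℂ := Complex.exp ((2 * Real.pi / N : ℝ) * Complex.I) with hω
  have hω0 : ω ≠ 0 := Complex.exp_ne_zero _
  have hωN : ω ^ (N : ℕ) = 1 := by
    rw [hω, ← Complex.exp_nat_mul]
    have : (N : ℂ) * (((2 * Real.pi / N : ℝ) : ℂ) * Complex.I) = 2 * Real.pi * Complex.I := by
      push_cast
      field_simp
    rw [this, Complex.exp_two_pi_mul_I]
  have hζ : ∀ j : ℕ, ω ^ ((j : ℤ) * m) = (ω ^ m) ^ j := by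
    intro j
    rw [mul_comm, zpow_mul, zpow_natCast]
  simp_rw [hζ]
  by_cases hdvd : (N : ℤ) ∣ m
  · obtain ⟨q, rfl⟩ := hdvd
    have h1 : ω ^ ((N : ℤ) * q) = 1 := by
      rw [zpow_mul, zpow_natCast, hωN, one_zpow]
    rw [if_pos (dvd_mul_right (N : ℤ) q)]
    simp [h1]
  · have hζ1 : ω ^ m ≠ 1 := by
      intro h
      rw [hω, ← Complex.exp_int_mul, Complex.exp_eq_one_iff] at h
      obtain ⟨q, hq⟩ := h
      have hπ : (Real.pi : ℂ) ≠ 0 := Complex.ofReal_ne_zero.2 Real.pi_ne_zero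
      have h2πI : (2 * (Real.pi : ℂ) * Complex.I) ≠ 0 := by
        simp [Real.pi_ne_zero, Complex.I_ne_zero]
      have hmc : (m : ℂ) = (q : ℂ) * N := by
        push_cast at hq
        field_simp at hq
        linear_combination hq
      have hm : m = q * N := by exact_mod_cast hmc
      exact hdvd ⟨q, by linarith [hm]⟩
    have hζN : (ω ^ m) ^ N = 1 := by
      rw [← zpow_natCast (ω ^ m), ← zpow_mul, mul_comm, zpow_mul, zpow_natCast, hωN, one_zpow]
    rw [geom_sum_eq hζ1, hζN, if_neg hdvd]
    simp

private lemma convex_sum_mem' {E : Type*} [AddCommGroup E] [Module ℝ E] {W : Set E}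
    (hW : Convex ℝ W) (h0 : (0 : E) ∈ W) (F : Finset ℕ) (μ : ℕ → ℝ) (v : ℕ → E)
    (hμ : ∀ n ∈ F, 0 ≤ μ n) (hs : ∑ n ∈ F, μ n ≤ 1) (hv : ∀ n ∈ F, v n ∈ W) :
    ∑ n ∈ F, μ n • v n ∈ W := by
  classical
  have hnone : none ∉ F.image some := by simp
  have key := hW.sum_mem (t := insert none (F.image some))
    (w := fun o => Option.elim o (1 - ∑ n ∈ F, μ n) μ) (z := fun o => Option.elim o 0 v)
    (by
      intro o ho
      rw [Finset.mem_insert] at ho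
      rcases ho with rfl | ho
      · simpa using sub_nonneg.2 hs
      · obtain ⟨n, hn, rfl⟩ := Finset.mem_image.1 ho
        exact hμ n hn)
    (by
      rw [Finset.sum_insert hnone,
        Finset.sum_image (fun a _ b _ h => Option.some_injective _ h)]
      simp)
    (by
      intro o ho
      rw [Finset.mem_insert] at ho
      rcases ho with rfl | ho
      · simpa using h0
      · obtain ⟨n, hn, rfl⟩ := Finset.mem_image.1 ho
        exact hv n hn)
  rw [Finset.sum_insert hnone,
    Finset.sum_image (fun a _ b _ h => Option.some_injective _ h)] at key
  simpa using key

/-- Vector valued Cauchy inequalities: if `c` is a holomorphic curve in a complex locally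
convex space `E`, given on the ball of radius `R` about `z` by the convergent power series
`c w = ∑ₙ (w-z)ⁿ • aₙ` (so that `c⁽ᵏ⁾(z)/k! = aₖ`), and `0 < r < R`, then for every `k`
the vector `(rᵏ/k!) • c⁽ᵏ⁾(z) = rᵏ • aₖ` lies in the closed absolutely convex hull of
`{c w : |w - z| = r}`. -/
theorem stmt_19 {E : Type*} [AddCommGroup E] [Module ℂ E] [Module ℝ E]
    [IsScalarTower ℝ ℂ E] [TopologicalSpace E] [IsTopologicalAddGroup E]
    [ContinuousSMul ℂ E] [LocallyConvexSpace ℝ E]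
    (c : ℂ → E) (z : ℂ) (a : ℕ → E) (R r : ℝ) (hr : 0 < r) (hrR : r < R)
    (hc : ∀ w : ℂ, ‖w - z‖ < R → HasSum (fun n : ℕ => (w - z) ^ n • a n) (c w)) :
    ∀ k : ℕ, ((r : ℂ) ^ k) • a k ∈
      closure (absConvexCombinations {y : E | ∃ w : ℂ, ‖w - z‖ = r ∧ y = c w}) := by
  classical
  intro k
  -- bridge between the real and complex scalar actions
  have rsmul : ∀ (x : ℝ) (y : E), ((x : ℂ)) • y = x • y := by
    intro x y
    have h1 : (x : ℂ) = x • (1 : ℂ) := by simp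
    rw [h1, smul_assoc, one_smul]
  haveI : SMulCommClass ℝ ℂ E := ⟨fun m d v => by
    rw [← rsmul m (d • v), ← rsmul m v, smul_smul, smul_smul, mul_comm]⟩
  haveI : ContinuousSMul ℝ E := by
    constructor
    have h : (fun p : ℝ × E => p.1 • p.2) = fun p : ℝ × E => ((p.1 : ℂ)) • p.2 := by
      funext p; rw [rsmul]
    rw [h]
    exact (Complex.continuous_ofReal.comp continuous_fst).smul continuous_snd
  rw [mem_closure_iff_nhds]
  intro U hU
  rw [← map_add_left_nhds_zero (((r : ℂ) ^ k) • a k), Filter.mem_map] at hU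
  obtain ⟨V, hV, hVadd⟩ := exists_nhds_zero_half hU
  obtain ⟨W, ⟨hWnhds, hWbal, hWconv⟩, hWV⟩ : ∃ W : Set E,
      (W ∈ 𝓝 (0 : E) ∧ Balanced ℂ W ∧ Convex ℝ W) ∧ W ⊆ V := by
    obtain ⟨s, ⟨hs0, hsc⟩, hsV⟩ := (LocallyConvexSpace.convex_basis_zero ℝ E).mem_iff.1 hV
    refine ⟨convexHull ℝ (balancedCore ℂ s), ⟨Filter.mem_of_superset
      (balancedCore_mem_nhds_zero hs0) (subset_convexHull ℝ _), ?_, convex_convexHull ℝ _⟩,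
      (convexHull_min (balancedCore_subset s) hsc).trans hsV⟩
    have hb : Balanced ℂ (balancedCore ℂ s) := balancedCore_balanced s
    have hconv : Convex ℝ { x | ∀ a : ℂ, ‖a‖ ≤ 1 → a • x ∈ convexHull ℝ (balancedCore ℂ s) } := by
      intro x hx y hy u v hu hv huv a ha
      rw [smul_add, ← smul_comm u, ← smul_comm v]
      exact convex_convexHull ℝ _ (hx a ha) (hy a ha) hu hv huv
    rw [balanced_iff_smul_mem] at hb ⊢
    refine fun a ha x hx => convexHull_min ?_ hconv hx a ha
    exact fun y hy a ha => subset_convexHull ℝ _ (hb ha hy)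
  have hW0 : (0 : E) ∈ W := mem_of_mem_nhds hWnhds
  -- auxiliary radius
  set ρ : ℝ := (r + R) / 2 with hρdef
  have hrρ : r < ρ := by rw [hρdef]; linarith
  have hρR : ρ < R := by rw [hρdef]; linarith
  have hρ0 : 0 < ρ := by linarith
  set t : ℝ := r / ρ with htdef
  have ht0 : 0 < t := div_pos hr hρ0
  have ht1 : t < 1 := (div_lt_one hρ0).2 hrρ
  -- the sequence ρⁿ • aₙ tends to zero
  have hb : HasSum (fun n : ℕ => ((ρ : ℂ)) ^ n • a n) (c (z + ρ)) := by
    have h1 := hc (z + ρ) (by simp [abs_of_pos hρ0]; linarith)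
    simpa using h1
  have hb0 : Filter.Tendsto (fun n : ℕ => ((ρ : ℂ)) ^ n • a n) Filter.atTop (𝓝 0) := by
    have h1 := hb.summable.tendsto_cofinite_zero
    rwa [Nat.cofinite_eq_atTop] at h1
  obtain ⟨n₀, hn₀⟩ := Filter.eventually_atTop.1 (hb0.eventually
    (Filter.eventually_of_mem hWnhds (fun y hy => hy)))
  -- choose N₁ so that t ^ N₁ ≤ 1 - t
  have hgt : Filter.Tendsto (fun n : ℕ => t ^ n) Filter.atTop (𝓝 0) :=
    tendsto_pow_atTop_nhds_zero_of_lt_one ht0.le ht1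
  obtain ⟨N₁, hN₁⟩ := Filter.eventually_atTop.1
    (hgt.eventually (gt_mem_nhds (by linarith : (0 : ℝ) < 1 - t)))
  set N : ℕ := max (max (k + 1) n₀) N₁ with hNdef
  have hkN : k + 1 ≤ N := le_trans (le_max_left _ _) (le_max_left _ _)
  have hNn₀ : n₀ ≤ N := le_trans (le_max_right _ _) (le_max_left _ _)
  have hNN₁ : N₁ ≤ N := le_max_right _ _
  have hN0 : 0 < N := lt_of_lt_of_le (Nat.succ_pos k) hkN
  have hNC : (N : ℂ) ≠ 0 := Nat.cast_ne_zero.2 hN0.ne'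
  -- the N-th root of unity
  set ω : ℂ := Complex.exp ((2 * Real.pi / N : ℝ) * Complex.I) with hωdef
  have hω0 : ω ≠ 0 := Complex.exp_ne_zero _
  have hωnorm : ‖ω‖ = 1 := by
    rw [hωdef]
    exact Complex.norm_exp_ofReal_mul_I _
  set lam : Fin N → ℂ := fun j => (N : ℂ)⁻¹ * ω ^ (-(((j : ℕ) : ℤ) * k)) with hlamdef
  set pts : Fin N → E := fun j => c (z + (r : ℂ) * ω ^ ((j : ℕ))) with hptsdef
  set S : E := ∑ j, lam j • pts j with hSdef
  -- the combination S lies in the set of absolutely convex combinations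
  have hSA : S ∈ absConvexCombinations {y : E | ∃ w : ℂ, ‖w - z‖ = r ∧ y = c w} := by
    refine ⟨N, lam, pts, fun j => ⟨z + (r : ℂ) * ω ^ ((j : ℕ)), ?_, rfl⟩, ?_, hSdef⟩
    · simp [norm_mul, norm_pow, hωnorm, abs_of_pos hr]
    · have h1 : ∀ j : Fin N, ‖lam j‖ = (N : ℝ)⁻¹ := by
        intro j
        rw [hlamdef]
        rw [norm_mul, norm_zpow, hωnorm, one_zpow, norm_inv]
        simp
      rw [Finset.sum_congr rfl fun j _ => h1 j]
      simp [Finset.card_univ]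
      rw [mul_inv_cancel₀ (by exact_mod_cast hN0.ne' : (N : ℝ) ≠ 0)]
  -- the power series expansion of S
  set f : ℕ → E := fun n =>
    (if (N : ℤ) ∣ ((n : ℤ) - (k : ℤ)) then (r : ℂ) ^ n else 0) • a n with hfdef
  have hsum : HasSum f S := by
    have hcj : ∀ j : Fin N,
        HasSum (fun n : ℕ => (lam j * ((r : ℂ) * ω ^ ((j : ℕ))) ^ n) • a n) (lam j • pts j) := by
      intro j
      have hnorm : ‖(z + (r : ℂ) * ω ^ ((j : ℕ))) - z‖ = r := by
        simp [norm_mul, norm_pow, hωnorm, abs_of_pos hr]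
      have h1 := hc (z + (r : ℂ) * ω ^ ((j : ℕ))) (by rw [hnorm]; exact hrR)
      have h2 : HasSum (fun n : ℕ => ((r : ℂ) * ω ^ ((j : ℕ))) ^ n • a n) (pts j) := by
        simpa using h1
      simpa [smul_smul] using h2.const_smul (lam j)
    have htot : HasSum (fun n : ℕ =>
        ∑ j : Fin N, (lam j * ((r : ℂ) * ω ^ ((j : ℕ))) ^ n) • a n) S :=
      hasSum_sum (fun j _ => hcj j)
    have hcoeff : ∀ n : ℕ, ∑ j : Fin N, (lam j * ((r : ℂ) * ω ^ ((j : ℕ))) ^ n) • a n = f n := by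
      intro n
      rw [hfdef]
      simp only
      rw [← Finset.sum_smul]
      congr 1
      have e1 : ∀ j : ℕ, ((N : ℂ)⁻¹ * ω ^ (-((j : ℤ) * k))) * ((r : ℂ) * ω ^ j) ^ n
          = (r : ℂ) ^ n * (N : ℂ)⁻¹ * ω ^ ((j : ℤ) * ((n : ℤ) - (k : ℤ))) := by
        intro j
        rw [mul_pow, ← pow_mul, ← zpow_natCast ω (j * n)]
        have hjn : ((j * n : ℕ) : ℤ) = (j : ℤ) * n := by push_cast; ring
        rw [hjn, show (j : ℤ) * ((n : ℤ) - (k : ℤ)) = -((j : ℤ) * k) + (j : ℤ) * n by ring,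
          zpow_add₀ hω0]
        ring
      calc ∑ j : Fin N, lam j * ((r : ℂ) * ω ^ ((j : ℕ))) ^ n
          = ∑ j ∈ Finset.range N,
              (r : ℂ) ^ n * (N : ℂ)⁻¹ * ω ^ ((j : ℤ) * ((n : ℤ) - (k : ℤ))) := by
            rw [← Fin.sum_univ_eq_sum_range
              (fun j => (r : ℂ) ^ n * (N : ℂ)⁻¹ * ω ^ ((j : ℤ) * ((n : ℤ) - (k : ℤ)))) N]
            exact Finset.sum_congr rfl fun j _ => e1 (j : ℕ)
        _ = (r : ℂ) ^ n * (N : ℂ)⁻¹ *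
              (if (N : ℤ) ∣ ((n : ℤ) - (k : ℤ)) then (N : ℂ) else 0) := by
            rw [← Finset.mul_sum, hωdef, rootSum' N hN0 ((n : ℤ) - (k : ℤ))]
        _ = if (N : ℤ) ∣ ((n : ℤ) - (k : ℤ)) then (r : ℂ) ^ n else 0 := by
            split_ifs
            · field_simp
            · ring
    exact (funext hcoeff : _) ▸ htot
  have hfk : f k = ((r : ℂ) ^ k) • a k := by
    rw [hfdef]
    simp
  set g : ℕ → E := Function.update f k 0 with hgdef
  have hupd : HasSum g (0 - f k + S) := hsum.update k 0
  -- every partial sum of g lies in W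
  have hpartial : ∀ F : Finset ℕ, (∑ n ∈ F, g n) ∈ W := by
    intro F
    rw [← Finset.sum_filter_ne_zero (s := F) (f := g)]
    set F' : Finset ℕ := F.filter (fun n => g n ≠ 0) with hF'
    have hFlow : ∀ n ∈ F', k + N ≤ n := by
      intro n hn
      obtain ⟨hnF, hne⟩ := Finset.mem_filter.1 hn
      by_contra hlt
      push_neg at hlt
      apply hne
      rcases eq_or_ne n k with rfl | hnk
      · rw [hgdef]; simp
      · rw [hgdef, Function.update_of_ne hnk, hfdef]
        simp only
        have hnd : ¬ (N : ℤ) ∣ ((n : ℤ) - (k : ℤ)) := by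
          intro hd
          have hm0 : ((n : ℤ) - (k : ℤ)) ≠ 0 := sub_ne_zero.2 (by exact_mod_cast hnk)
          have hle : (N : ℤ) ≤ |(n : ℤ) - (k : ℤ)| :=
            Int.le_of_dvd (abs_pos.2 hm0) ((dvd_abs _ _).2 hd)
          have h1 : ((n : ℤ) - (k : ℤ)) < N := by
            have : (n : ℤ) < k + N := by exact_mod_cast hlt
            linarith
          have h2 : -(N : ℤ) < ((n : ℤ) - (k : ℤ)) := by
            have : (0 : ℤ) ≤ (n : ℤ) := Int.natCast_nonneg n
            have hkN' : (k : ℤ) < N := by exact_mod_cast Nat.lt_of_succ_le hkN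
            linarith
          exact absurd hle (not_le.2 (abs_lt.2 ⟨h2, h1⟩))
        rw [if_neg hnd, zero_smul]
    have hterm : ∀ n ∈ F', g n = (t ^ n : ℝ) • (((ρ : ℂ)) ^ n • a n) := by
      intro n hn
      obtain ⟨hnF, hne⟩ := Finset.mem_filter.1 hn
      have hkn : k + N ≤ n := hFlow n hn
      have hnk : n ≠ k := by omega
      rw [hgdef, Function.update_of_ne hnk, hfdef] at hne ⊢
      simp only at hne ⊢
      by_cases hd : (N : ℤ) ∣ ((n : ℤ) - (k : ℤ))
      · rw [if_pos hd, ← rsmul, smul_smul]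
        congr 1
        push_cast
        rw [← mul_pow]
        congr 1
        rw [htdef]
        push_cast
        rw [div_mul_cancel₀]
        exact_mod_cast hρ0.ne'
      · exact absurd (by rw [if_neg hd, zero_smul]) hne
    rw [Finset.sum_congr rfl hterm]
    refine convex_sum_mem' hWconv hW0 F' _ _ (fun n _ => pow_nonneg ht0.le n) ?_
      (fun n hn => hn₀ n (by have := hFlow n hn; omega))
    -- the weights sum to at most 1
    set B : ℕ := max ((F'.sup id) + 1) (k + N) with hB
    have hsub : F' ⊆ Finset.Ico (k + N) B := by
      intro n hn
      refine Finset.mem_Ico.2 ⟨hFlow n hn, ?_⟩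
      calc n ≤ F'.sup id := Finset.le_sup (f := id) hn
        _ < (F'.sup id) + 1 := Nat.lt_succ_self _
        _ ≤ B := le_max_left _ _
    have htkN : t ^ (k + N) ≤ 1 - t := by
      calc t ^ (k + N) ≤ t ^ N₁ :=
            pow_le_pow_of_le_one ht0.le ht1.le (by omega)
        _ ≤ 1 - t := (hN₁ N₁ le_rfl).le
    calc ∑ n ∈ F', t ^ n ≤ ∑ n ∈ Finset.Ico (k + N) B, t ^ n :=
          Finset.sum_le_sum_of_subset_of_nonneg hsub (fun i _ _ => pow_nonneg ht0.le i)
      _ = (t ^ B - t ^ (k + N)) / (t - 1) := geom_sum_Ico ht1.ne (le_max_right _ _)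
      _ = (t ^ (k + N) - t ^ B) / (1 - t) := by
          rw [div_eq_div_iff (by linarith) (by linarith)]
          ring
      _ ≤ 1 := by
          rw [div_le_one (by linarith)]
          have : (0 : ℝ) ≤ t ^ B := pow_nonneg ht0.le B
          linarith
  -- hence the sum of g lies in W + W ⊆ V + V
  have hTW : (0 - f k + S) ∈ closure W := by
    have hTt : Filter.Tendsto (fun s : Finset ℕ => ∑ n ∈ s, g n)
        Filter.atTop (𝓝 (0 - f k + S)) := hupd
    exact mem_closure_of_tendsto hTt (Filter.Eventually.of_forall hpartial)
  have hmap : (fun y => (0 - f k + S) + y) '' W ∈ 𝓝 (0 - f k + S) := by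
    rw [← map_add_left_nhds_zero (0 - f k + S)]
    exact Filter.image_mem_map hWnhds
  obtain ⟨y, ⟨w1, hw1, hyw⟩, hyW⟩ := mem_closure_iff_nhds.1 hTW _ hmap
  have hnw1 : -w1 ∈ W := by
    have h2 := hWbal (-1 : ℂ) (by norm_num)
    have h3 : (-1 : ℂ) • w1 ∈ (-1 : ℂ) • W := Set.smul_mem_smul_set hw1
    simpa using h2 h3
  have hyV : y ∈ V := hWV hyW
  have hnwV : -w1 ∈ V := hWV hnw1
  have hfin := hVadd y hyV (-w1) hnwV
  -- conclude
  have hy2 : y + -w1 = 0 - f k + S := by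
    rw [← hyw]; beta_reduce; abel
  refine ⟨S, ?_, hSA⟩
  have := hfin
  rw [hy2] at this
  have hU' : ((r : ℂ) ^ k) • a k + (0 - f k + S) ∈ U := this
  rw [hfk] at hU'
  have heq : ((r : ℂ) ^ k) • a k + (0 - ((r : ℂ) ^ k) • a k + S) = S := by abel
  rwa [heq] at hU'
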